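/- Let n ≥ 2, let Q be a monic strictly hyperbolic real polynomial of degree n−1, and let c₀ ∈ ℝ be such that P := (X − c₀)·Q is strictly hyperbolic (i.e. c₀ is not a root of Q), and let ξ₀ ∈ ℝ satisfy P'(ξ₀) = 0. Suppose f : ℝ → ℝ is differentiable at c₀, f(c₀) = ξ₀, and for all c in some neighborhood of c₀ the polynomial ((X − c)·Q)' vanishes at f(c). Then P''(ξ₀) ≠ 0, ξ₀ ≠ c₀, and f'(c₀) = Q'(ξ₀)/P''(ξ₀) = −P(ξ₀)/((ξ₀ − c₀)²·P''(ξ₀)) > 0. -/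

import Mathlib

open Polynomial

lemma key_sign (t : Finset ℝ) (ht : t.Nonempty) (x : ℝ)
    (hx : ∀ r ∈ t, x - r ≠ 0)
    (h1 : (Polynomial.derivative (∏ r ∈ t, (X - C r))).eval x = 0) :
    (∏ r ∈ t, (X - C r)).eval x *
      (Polynomial.derivative (Polynomial.derivative (∏ r ∈ t, (X - C r)))).eval x < 0 := by
  set p : Polynomial ℝ := ∏ r ∈ t, (X - C r) with hp
  set A : ℝ := p.eval x with hA
  have hevalp : ∀ (s : Finset ℝ), (∏ r ∈ s, (X - C r)).eval x = ∏ r ∈ s, (x - r) := by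
    intro s; simp [eval_prod]
  have hAprod : A = ∏ r ∈ t, (x - r) := by rw [hA, hp, hevalp]
  have hAne : A ≠ 0 := by
    rw [hAprod]; exact Finset.prod_ne_zero_iff.2 hx
  set a : ℝ → ℝ := fun r => (x - r)⁻¹ with ha
  -- derivative of p
  have hd1 : Polynomial.derivative p = ∑ r ∈ t, ∏ s ∈ t.erase r, (X - C s) := by
    have h0 : Polynomial.derivative (∏ r ∈ t, (X - C r))
        = ∑ r ∈ t, (∏ s ∈ t.erase r, (X - C s)) * Polynomial.derivative (X - C r) :=
      Polynomial.derivative_prod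
    rw [hp, h0]; simp
  have hprod_erase : ∀ r ∈ t, ∏ s ∈ t.erase r, (x - s) = A * a r := by
    intro r hr
    have h2 : A = (x - r) * ∏ s ∈ t.erase r, (x - s) := by
      rw [hAprod, ← Finset.mul_prod_erase t _ hr]
    have hre := hx r hr
    rw [ha]; simp only; field_simp; linear_combination -h2
  have hS1 : ∑ r ∈ t, a r = 0 := by
    have h3 : (Polynomial.derivative p).eval x = ∑ r ∈ t, (A * a r) := by
      rw [hd1, eval_finset_sum]
      refine Finset.sum_congr rfl fun r hr => ?_
      rw [hevalp, hprod_erase r hr]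
    rw [h1, ← Finset.mul_sum] at h3
    exact (mul_eq_zero.1 h3.symm).resolve_left hAne
  -- second derivative
  have hd2 : Polynomial.derivative (Polynomial.derivative p)
      = ∑ r ∈ t, ∑ s ∈ (t.erase r), ∏ u ∈ (t.erase r).erase s, (X - C u) := by
    rw [hd1, map_sum]
    refine Finset.sum_congr rfl fun r hr => ?_
    have h0 : Polynomial.derivative (∏ s ∈ t.erase r, (X - C s))
        = ∑ s ∈ t.erase r, (∏ u ∈ (t.erase r).erase s, (X - C u)) * Polynomial.derivative (X - C s) :=
      Polynomial.derivative_prod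
    rw [h0]; simp
  have hprod_erase2 : ∀ r ∈ t, ∀ s ∈ t.erase r,
      ∏ u ∈ (t.erase r).erase s, (x - u) = A * a r * a s := by
    intro r hr s hs
    have hse : x - s ≠ 0 := hx s (Finset.mem_of_mem_erase hs)
    have hre : x - r ≠ 0 := hx r hr
    have h2 : A = (x - r) * ((x - s) * ∏ u ∈ (t.erase r).erase s, (x - u)) := by
      rw [hAprod, ← Finset.mul_prod_erase t _ hr, ← Finset.mul_prod_erase (t.erase r) _ hs]
    rw [ha]; simp only; field_simp; linear_combination -h2
  have heval2 : (Polynomial.derivative (Polynomial.derivative p)).eval x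
      = A * ∑ r ∈ t, ∑ s ∈ t.erase r, a r * a s := by
    rw [hd2, eval_finset_sum, Finset.mul_sum]
    refine Finset.sum_congr rfl fun r hr => ?_
    rw [eval_finset_sum, Finset.mul_sum]
    refine Finset.sum_congr rfl fun s hs => ?_
    rw [hevalp, hprod_erase2 r hr s hs]; ring
  -- off-diagonal sum equals S1^2 - S2 = -S2
  have hsq : (∑ r ∈ t, a r) * (∑ s ∈ t, a s)
      = ∑ r ∈ t, (a r * a r + ∑ s ∈ t.erase r, a r * a s) := by
    rw [Finset.sum_mul_sum]
    exact Finset.sum_congr rfl fun r hr => (Finset.add_sum_erase t (fun s => a r * a s) hr).symm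
  have hD : ∑ r ∈ t, ∑ s ∈ t.erase r, a r * a s = - ∑ r ∈ t, a r * a r := by
    have h4 := hsq
    rw [hS1, zero_mul, Finset.sum_add_distrib] at h4
    linarith [h4]
  have hS2pos : 0 < ∑ r ∈ t, a r * a r := by
    refine Finset.sum_pos (fun r hr => ?_) ht
    exact mul_self_pos.2 (inv_ne_zero (hx r hr))
  rw [heval2, hD]
  have hpos : 0 < (A * A) * (∑ r ∈ t, a r * a r) := mul_pos (mul_self_pos.2 hAne) hS2pos
  nlinarith [hpos]

lemma deriv_ne_zero_at_root (t : Finset ℝ) (r : ℝ) (hr : r ∈ t) :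
    (Polynomial.derivative (∏ s ∈ t, (X - C s))).eval r ≠ 0 := by
  have h0 : Polynomial.derivative (∏ s ∈ t, (X - C s))
      = ∑ s ∈ t, (∏ u ∈ t.erase s, (X - C u)) * Polynomial.derivative (X - C s) :=
    Polynomial.derivative_prod
  rw [h0, eval_finset_sum]
  have hz : ∀ s ∈ t, s ≠ r →
      ((∏ u ∈ t.erase s, (X - C u)) * Polynomial.derivative (X - C s)).eval r = 0 := by
    intro s hs hne
    have hmem : r ∈ t.erase s := Finset.mem_erase.2 ⟨fun h => hne h.symm, hr⟩
    rw [eval_mul, eval_prod, Finset.prod_eq_zero hmem (by simp), zero_mul]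
  rw [Finset.sum_eq_single_of_mem r hr hz]
  simp only [derivative_X_sub_C, mul_one, eval_prod, eval_sub, eval_X, eval_C]
  refine Finset.prod_ne_zero_iff.2 fun u hu => sub_ne_zero.2 fun h => ?_
  exact (Finset.mem_erase.1 hu).1 h.symm

/-- Let `Q` be a monic strictly hyperbolic real polynomial of degree `n - 1` (with
`n ≥ 2`), let `c₀` not be a root of `Q` (so that `P := (X - c₀) * Q` is strictly
hyperbolic of degree `n`), and let `ξ₀` be a critical point of `P`. If `f` is a
function, differentiable at `c₀` with `f c₀ = ξ₀`, which tracks a root of the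
derivative of `(X - c) * Q` as `c` varies near `c₀`, then `P''(ξ₀) ≠ 0`,
`ξ₀ ≠ c₀`, and `f'(c₀) = Q'(ξ₀)/P''(ξ₀) = -P(ξ₀)/((ξ₀ - c₀)² P''(ξ₀)) > 0`. -/
theorem deriv_of_root_of_derivative_wrt_simple_root
    (n : ℕ) (hn : 2 ≤ n) (Q : Polynomial ℝ)
    (hQmonic : Q.Monic) (hQdeg : Q.natDegree = n - 1)
    (hQroots : Q.roots.card = n - 1) (hQnodup : Q.roots.Nodup)
    (c₀ : ℝ) (hc₀ : Q.eval c₀ ≠ 0)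
    (P : Polynomial ℝ) (hPdef : P = (X - C c₀) * Q)
    (ξ₀ : ℝ) (hξ₀ : (Polynomial.derivative P).eval ξ₀ = 0)
    (f : ℝ → ℝ) (hf : DifferentiableAt ℝ f c₀) (hfc₀ : f c₀ = ξ₀)
    (hftrack : ∀ᶠ c in nhds c₀,
      (Polynomial.derivative ((X - C c) * Q)).eval (f c) = 0) :
    (Polynomial.derivative (Polynomial.derivative P)).eval ξ₀ ≠ 0 ∧
    ξ₀ ≠ c₀ ∧
    deriv f c₀ = (Polynomial.derivative Q).eval ξ₀ /
      (Polynomial.derivative (Polynomial.derivative P)).eval ξ₀ ∧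
    deriv f c₀ = -P.eval ξ₀ /
      ((ξ₀ - c₀) ^ 2 * (Polynomial.derivative (Polynomial.derivative P)).eval ξ₀) ∧
    0 < deriv f c₀ := by
  -- write P as a product over its distinct roots
  have hc₀mem : c₀ ∉ Q.roots := fun h => hc₀ (Polynomial.isRoot_of_mem_roots h)
  have hnodup : (c₀ ::ₘ Q.roots).Nodup := Multiset.nodup_cons.2 ⟨hc₀mem, hQnodup⟩
  set t : Finset ℝ := ⟨c₀ ::ₘ Q.roots, hnodup⟩ with ht
  have hQsplits : Q.Splits :=
    (Polynomial.splits_iff_card_roots).2 (by rw [hQroots, hQdeg])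
  have hQprod : Q = (Q.roots.map fun a => X - C a).prod :=
    hQsplits.eq_prod_roots_of_monic hQmonic
  have hPfin : P = ∏ r ∈ t, (X - C r) := by
    rw [hPdef, ht]
    show _ = ((c₀ ::ₘ Q.roots).map fun a => X - C a).prod
    rw [Multiset.map_cons, Multiset.prod_cons, ← hQprod]
  have htne : t.Nonempty := ⟨c₀, Multiset.mem_cons_self _ _⟩
  -- ξ₀ is not a root of P
  have hx : ∀ r ∈ t, ξ₀ - r ≠ 0 := by
    intro r hr
    refine sub_ne_zero.2 fun he => ?_
    exact deriv_ne_zero_at_root t r hr (by rw [← hPfin, ← he]; exact hξ₀)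
  -- Laguerre sign inequality
  have hsign : P.eval ξ₀ * (Polynomial.derivative (Polynomial.derivative P)).eval ξ₀ < 0 := by
    rw [hPfin]
    exact key_sign t htne ξ₀ hx (by rw [← hPfin]; exact hξ₀)
  have hB : (Polynomial.derivative (Polynomial.derivative P)).eval ξ₀ ≠ 0 := by
    intro h; rw [h, mul_zero] at hsign; exact lt_irrefl 0 hsign
  -- formulas for derivatives of P
  have hdgen : ∀ c x : ℝ, (Polynomial.derivative ((X - C c) * Q)).eval x
      = Q.eval x + (x - c) * (Polynomial.derivative Q).eval x := by
    intro c x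
    rw [derivative_mul, derivative_X_sub_C, one_mul]
    simp
  have hP'eval : Q.eval ξ₀ + (ξ₀ - c₀) * (Polynomial.derivative Q).eval ξ₀ = 0 := by
    rw [← hdgen, ← hPdef]; exact hξ₀
  have hne : ξ₀ ≠ c₀ := by
    intro h
    rw [h, sub_self, zero_mul, add_zero] at hP'eval
    exact hc₀ hP'eval
  have hddP : Polynomial.derivative (Polynomial.derivative P)
      = Polynomial.derivative Q + (Polynomial.derivative Q
        + (X - C c₀) * Polynomial.derivative (Polynomial.derivative Q)) := by
    rw [hPdef, derivative_mul, derivative_X_sub_C, one_mul, derivative_add, derivative_mul,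
      derivative_X_sub_C, one_mul]
  have hB2 : (Polynomial.derivative (Polynomial.derivative P)).eval ξ₀
      = 2 * (Polynomial.derivative Q).eval ξ₀
        + (ξ₀ - c₀) * (Polynomial.derivative (Polynomial.derivative Q)).eval ξ₀ := by
    rw [hddP]; simp; ring
  -- the tracking function h and its derivative
  set f' : ℝ := deriv f c₀ with hf'
  set q1 : ℝ := (Polynomial.derivative Q).eval ξ₀ with hq1
  set q2 : ℝ := (Polynomial.derivative (Polynomial.derivative Q)).eval ξ₀ with hq2
  have hfd : HasDerivAt f f' c₀ := hf.hasDerivAt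
  have h1 : HasDerivAt (fun c => Q.eval (f c)) ((Polynomial.derivative Q).eval (f c₀) * f') c₀ :=
    (Q.hasDerivAt (f c₀)).comp c₀ hfd
  have h2 : HasDerivAt (fun c => f c - c) (f' - 1) c₀ := hfd.sub (hasDerivAt_id c₀)
  have h3 : HasDerivAt (fun c => (Polynomial.derivative Q).eval (f c))
      ((Polynomial.derivative (Polynomial.derivative Q)).eval (f c₀) * f') c₀ :=
    ((Polynomial.derivative Q).hasDerivAt (f c₀)).comp c₀ hfd
  have h4 := h2.mul h3
  have h5 := h1.add h4
  have hh0 : (fun c => Q.eval (f c) + (f c - c) * (Polynomial.derivative Q).eval (f c))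
      =ᶠ[nhds c₀] (fun _ => (0 : ℝ)) := by
    filter_upwards [hftrack] with c hc
    rw [← hdgen]; exact hc
  have hD0 : (Polynomial.derivative Q).eval (f c₀) * f'
      + ((f' - 1) * (Polynomial.derivative Q).eval (f c₀)
        + (f c₀ - c₀) * ((Polynomial.derivative (Polynomial.derivative Q)).eval (f c₀) * f')) = 0 := by
    have := (show HasDerivAt (fun c => Q.eval (f c) + (f c - c) * (Polynomial.derivative Q).eval (f c)) _ c₀ from h5).deriv
    rw [hh0.deriv_eq, deriv_const] at this
    exact this.symm
  rw [hfc₀] at hD0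
  rw [← hq1, ← hq2] at hD0
  -- main derivative equation
  have hkey : f' * (Polynomial.derivative (Polynomial.derivative P)).eval ξ₀ = q1 := by
    rw [hB2]
    linear_combination hD0
  have hsub : ξ₀ - c₀ ≠ 0 := sub_ne_zero.2 hne
  have hQv : Q.eval ξ₀ = -((ξ₀ - c₀) * q1) := by linarith [hP'eval]
  have hPval : P.eval ξ₀ = -((ξ₀ - c₀) ^ 2 * q1) := by
    rw [hPdef, eval_mul, eval_sub, eval_X, eval_C, hQv]; ring
  have h3' : f' = q1 / (Polynomial.derivative (Polynomial.derivative P)).eval ξ₀ := by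
    rw [eq_div_iff hB]; exact hkey
  refine ⟨hB, hne, h3', ?_, ?_⟩
  · rw [h3', hPval]
    field_simp
  · have hs : 0 < (ξ₀ - c₀) ^ 2 := by positivity
    have hBsq : 0 < ((Polynomial.derivative (Polynomial.derivative P)).eval ξ₀) ^ 2 := by
      positivity
    rw [hPval] at hsign
    have h6 : 0 < (ξ₀ - c₀) ^ 2 *
        (q1 * (Polynomial.derivative (Polynomial.derivative P)).eval ξ₀) := by nlinarith [hsign]
    have hq1B : 0 < q1 * (Polynomial.derivative (Polynomial.derivative P)).eval ξ₀ := by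
      nlinarith [h6, hs]
    have hf'eq : f' = (q1 * (Polynomial.derivative (Polynomial.derivative P)).eval ξ₀) /
        ((Polynomial.derivative (Polynomial.derivative P)).eval ξ₀) ^ 2 := by
      rw [h3']; field_simp
    rw [hf'eq]; exact div_pos hq1B hBsq
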